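/- Let Diagram 1 of abelian groups be given, let Y = F ×_Q G be the pullback, and let α : Hom(R ⊕ S, P) → Ext¹(Q, P) be the connecting homomorphism obtained by applying the functor Hom(−, P) to the short exact sequence 0 → R ⊕ S → Y → Q → 0. If α is surjective, then for any two extensions (X, i, j, m, n) and (X₁, i₁, j₁, m₁, n₁) of Diagram 1 there exists a group isomorphism φ : X → X₁ satisfying φ∘(i∘μ) = i₁∘μ, m₁∘φ = m, and n₁∘φ = n (equivalently, φ carries the extension 0 → P → X → Y → 0 to the extension 0 → P → X₁ → Y → 0 over the identities of P and Y). -/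

import Mathlib

universe u

open CategoryTheory

noncomputable instance : HasDerivedCategory.{max (u+1) u} AddCommGrpCat.{u} :=
  HasDerivedCategory.standard _

instance : HasExt.{max (u+1) u} AddCommGrpCat.{u} :=
  hasExt_of_hasDerivedCategory _

variable {F G Q R S : Type u}
  [AddCommGroup F] [AddCommGroup G] [AddCommGroup Q] [AddCommGroup R] [AddCommGroup S]

def pullbackSubgroup (πF : F →+ Q) (πG : G →+ Q) : AddSubgroup (F × G) where
  carrier := {p | πF p.1 = πG p.2}
  zero_mem' := by simp
  add_mem' := by
    intro a b ha hb
    simp only [Set.mem_setOf_eq, Prod.fst_add, Prod.snd_add, map_add] at *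
    rw [ha, hb]
  neg_mem' := by
    intro a ha
    simp only [Set.mem_setOf_eq, Prod.fst_neg, Prod.snd_neg, map_neg] at *
    rw [ha]

universe w v' u'

section Aux

open Category Abelian DerivedCategory Limits in
/-- In an abelian category, a short exact sequence whose `extClass` vanishes
admits a section of its epimorphism. -/
lemma splitting_of_extClass_eq_zero' {C : Type u'} [Category.{v'} C] [Abelian C]
    [HasExt.{w} C]
    {S : ShortComplex C} (hS : S.ShortExact) (h0 : hS.extClass = 0) :
    ∃ s : S.X₃ ⟶ S.X₂, s ≫ S.g = 𝟙 S.X₃ := by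
  obtain ⟨x₂, hx₂⟩ := Ext.covariant_sequence_exact₃ S.X₃ hS (Ext.mk₀ (𝟙 S.X₃)) rfl
    (by rw [h0, Ext.comp_zero])
  letI := HasDerivedCategory.standard C
  set Sf := DerivedCategory.singleFunctor C 0 with hSf
  set Hl := DerivedCategory.homologyFunctor C 0 with hHl
  have hz : ((0 : ℕ) : ℤ) = 0 := by simp
  set zero' := shiftFunctorZero' (DerivedCategory C) ((0 : ℕ) : ℤ) hz with hzero'
  set y : Sf.obj S.X₃ ⟶ Sf.obj S.X₂ := x₂.hom ≫ zero'.hom.app (Sf.obj S.X₂) with hy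
  have hysec : y ≫ Sf.map S.g = 𝟙 (Sf.obj S.X₃) := by
    have hnat := zero'.hom.naturality (Sf.map S.g)
    have h1 : y ≫ Sf.map S.g =
        x₂.hom ≫ (Sf.map S.g)⟦((0:ℕ):ℤ)⟧' ≫ zero'.hom.app (Sf.obj S.X₃) := by
      rw [hy, assoc]
      congr 1
      exact hnat.symm
    rw [h1]
    have h2 := Ext.hom_comp_singleFunctor_map_shift (C := C) x₂ S.g
    rw [← assoc, h2, hx₂, Ext.mk₀_hom]
    show (ShiftedHom.mk₀ _ _ (Sf.map (𝟙 S.X₃)) : _ ⟶ _) ≫ _ = _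
    rw [ShiftedHom.mk₀]
    simp [zero']
  let e₁ : Sf ≅ CochainComplex.singleFunctor C 0 ⋙ DerivedCategory.Q :=
    (SingleFunctors.evaluation _ _ (0 : ℤ)).mapIso (DerivedCategory.singleFunctorsPostcompQIso C)
  let ε : Sf ⋙ Hl ≅ 𝟭 C :=
    Functor.isoWhiskerRight e₁ Hl ≪≫ Functor.associator _ _ _ ≪≫
      Functor.isoWhiskerLeft (CochainComplex.singleFunctor C 0)
        (DerivedCategory.homologyFunctorFactors C 0) ≪≫
      HomologicalComplex.homologyFunctorSingleIso C (ComplexShape.up ℤ) 0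
  refine ⟨ε.inv.app S.X₃ ≫ Hl.map y ≫ ε.hom.app S.X₂, ?_⟩
  have hnat := ε.hom.naturality S.g
  dsimp only [Functor.comp_map, Functor.id_map] at hnat
  rw [assoc, assoc, ← hnat, ← assoc (Hl.map y), ← Hl.map_comp, hysec, Hl.map_id, id_comp,
    Iso.inv_hom_id_app]
  rfl

variable {P H X : Type u} [AddCommGroup P] [AddCommGroup H] [AddCommGroup X]

/-- Auxiliary surjectivity: the natural map from an extension of Diagram 1 to the
pullback `Y = F ×_Q G` is surjective. -/
lemma pawar_aux_surj (σ : S →+ G) (πG : G →+ Q)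
    (hrow2 : AddMonoidHom.ker πG = AddMonoidHom.range σ)
    (πH : H →+ S) (hπH : Function.Surjective πH) (πF : F →+ Q)
    (i : H →+ X) (m : X →+ F) (n : X →+ G) (hm : Function.Surjective m)
    (hmidrow : AddMonoidHom.ker m = AddMonoidHom.range i)
    (hsq3 : n.comp i = σ.comp πH)
    (hsq4 : πF.comp m = πG.comp n) :
    ∀ y : pullbackSubgroup πF πG, ∃ x : X, m x = (y : F × G).1 ∧ n x = (y : F × G).2 := by
  rintro ⟨⟨f, g⟩, hy⟩
  have hy' : πF f = πG g := hy
  obtain ⟨x₀, hx₀⟩ := hm f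
  have h1 : πG (g - n x₀) = 0 := by
    have h2 : πF (m x₀) = πG (n x₀) := DFunLike.congr_fun hsq4 x₀
    rw [map_sub, ← h2, hx₀, ← hy', sub_self]
  have h3 : g - n x₀ ∈ AddMonoidHom.ker πG := h1
  rw [hrow2] at h3
  obtain ⟨s, hs⟩ := h3
  obtain ⟨h, hh⟩ := hπH s
  refine ⟨x₀ + i h, ?_, ?_⟩
  · have h4 : i h ∈ AddMonoidHom.ker m := by rw [hmidrow]; exact ⟨h, rfl⟩
    rw [map_add, AddMonoidHom.mem_ker.mp h4, add_zero, hx₀]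
  · have h5 : n (i h) = σ (πH h) := DFunLike.congr_fun hsq3 h
    rw [map_add, h5, hh, hs, add_sub_cancel]

/-- Auxiliary kernel description: an element of an extension of Diagram 1 killed by
both maps to `F` and `G` comes from `P`. -/
lemma pawar_aux_ker (σ : S →+ G) (hσ : Function.Injective σ)
    (μ : P →+ H) (πH : H →+ S)
    (hcol1 : AddMonoidHom.ker πH = AddMonoidHom.range μ)
    (i : H →+ X) (m : X →+ F) (n : X →+ G)
    (hmidrow : AddMonoidHom.ker m = AddMonoidHom.range i)
    (hsq3 : n.comp i = σ.comp πH) :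
    ∀ x : X, m x = 0 → n x = 0 → ∃ p : P, i (μ p) = x := by
  intro x hmx hnx
  have h1 : x ∈ AddMonoidHom.ker m := hmx
  rw [hmidrow] at h1
  obtain ⟨h, rfl⟩ := h1
  have h2 : σ (πH h) = 0 := by
    have h5 : n (i h) = σ (πH h) := DFunLike.congr_fun hsq3 h
    rw [← h5]; exact hnx
  have h3 : πH h = 0 := hσ (by rw [h2, map_zero])
  have h4 : h ∈ AddMonoidHom.ker πH := h3
  rw [hcol1] at h4
  obtain ⟨p, rfl⟩ := h4
  exact ⟨p, rfl⟩

end Aux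

def iotaRS (ρ : R →+ F) (σ : S →+ G) (πF : F →+ Q) (πG : G →+ Q)
    (hkerF : AddMonoidHom.ker πF = AddMonoidHom.range ρ)
    (hkerG : AddMonoidHom.ker πG = AddMonoidHom.range σ) :
    R × S →+ pullbackSubgroup πF πG :=
  AddMonoidHom.codRestrict (AddMonoidHom.prodMap ρ σ) _ (by
    intro p
    have h1 : ρ p.1 ∈ AddMonoidHom.ker πF := by rw [hkerF]; exact ⟨p.1, rfl⟩
    have h2 : σ p.2 ∈ AddMonoidHom.ker πG := by rw [hkerG]; exact ⟨p.2, rfl⟩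
    show πF (ρ p.1) = πG (σ p.2)
    rw [AddMonoidHom.mem_ker] at h1 h2
    rw [h1, h2])

def piY (πF : F →+ Q) (πG : G →+ Q) : pullbackSubgroup πF πG →+ Q :=
  πF.comp ((AddMonoidHom.fst F G).comp (pullbackSubgroup πF πG).subtype)

/-- The short complex `R ⊕ S → Y → Q` in the category of abelian groups. -/
def pullbackShortComplex (ρ : R →+ F) (σ : S →+ G) (πF : F →+ Q) (πG : G →+ Q)
    (hkerF : AddMonoidHom.ker πF = AddMonoidHom.range ρ)
    (hkerG : AddMonoidHom.ker πG = AddMonoidHom.range σ) :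
    ShortComplex AddCommGrpCat.{u} :=
  ShortComplex.mk
    (AddCommGrpCat.ofHom (iotaRS ρ σ πF πG hkerF hkerG))
    (AddCommGrpCat.ofHom (piY πF πG))
    (by
      ext p
      show πF (ρ p.1) = 0
      have h1 : ρ p.1 ∈ AddMonoidHom.ker πF := by rw [hkerF]; exact ⟨p.1, rfl⟩
      rwa [AddMonoidHom.mem_ker] at h1)

/-- The sequence `0 → R ⊕ S → Y → Q → 0` is short exact. -/
lemma pullbackShortComplex_shortExact
    (ρ : R →+ F) (σ : S →+ G) (πF : F →+ Q) (πG : G →+ Q)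
    (hρ : Function.Injective ρ) (hσ : Function.Injective σ)
    (hπF : Function.Surjective πF) (hπG : Function.Surjective πG)
    (hkerF : AddMonoidHom.ker πF = AddMonoidHom.range ρ)
    (hkerG : AddMonoidHom.ker πG = AddMonoidHom.range σ) :
    (pullbackShortComplex ρ σ πF πG hkerF hkerG).ShortExact where
  exact := by
    rw [ShortComplex.ab_exact_iff]
    intro y hy
    obtain ⟨⟨yf, yg⟩, hymem⟩ := y
    have hymem' : πF yf = πG yg := hymem
    have hy' : πF yf = 0 := hy
    have h1 : yf ∈ AddMonoidHom.ker πF := hy'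
    rw [hkerF] at h1
    obtain ⟨r, hr⟩ := h1
    have h2 : yg ∈ AddMonoidHom.ker πG := by
      rw [AddMonoidHom.mem_ker, ← hymem']; exact hy'
    rw [hkerG] at h2
    obtain ⟨s, hs⟩ := h2
    exact ⟨(r, s), Subtype.ext (Prod.ext hr hs)⟩
  mono_f := by
    rw [AddCommGrpCat.mono_iff_injective]
    intro a b hab
    have h1 : (ρ.prodMap σ) a = (ρ.prodMap σ) b := congrArg Subtype.val hab
    have h2 : ρ a.1 = ρ b.1 := congrArg Prod.fst h1
    have h3 : σ a.2 = σ b.2 := congrArg Prod.snd h1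
    exact Prod.ext (hρ h2) (hσ h3)
  epi_g := by
    rw [AddCommGrpCat.epi_iff_surjective]
    intro q
    obtain ⟨f, hf⟩ := hπF q
    obtain ⟨g, hg⟩ := hπG q
    exact ⟨⟨(f, g), hf.trans hg.symm⟩, hf⟩

open Abelian in
/-- The connecting homomorphism `α : Hom(R ⊕ S, P) → Ext¹(Q, P)` obtained by applying
`Hom(−, P)` to the short exact sequence `0 → R ⊕ S → Y → Q → 0`; it is given by the
Yoneda composition of the extension class of this sequence with a homomorphism. -/
noncomputable def alphaMap {P : Type u} [AddCommGroup P]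
    (ρ : R →+ F) (σ : S →+ G) (πF : F →+ Q) (πG : G →+ Q)
    (hρ : Function.Injective ρ) (hσ : Function.Injective σ)
    (hπF : Function.Surjective πF) (hπG : Function.Surjective πG)
    (hkerF : AddMonoidHom.ker πF = AddMonoidHom.range ρ)
    (hkerG : AddMonoidHom.ker πG = AddMonoidHom.range σ) :
    (R × S →+ P) → Ext (AddCommGrpCat.of Q) (AddCommGrpCat.of P) 1 :=
  fun lam =>
    (pullbackShortComplex_shortExact ρ σ πF πG hρ hσ hπF hπG hkerF hkerG).extClass.comp
      (Ext.mk₀ (AddCommGrpCat.ofHom lam)) (add_zero 1)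

open Abelian in
/-- **Rakesh Pawar's uniqueness theorem** (Proposition `rpthmu` of the note), in the category
of abelian groups: if the connecting homomorphism `α : Hom(R ⊕ S, P) → Ext¹(Q,P)` of the
short exact sequence `0 → R ⊕ S → Y → Q → 0` (where `Y = F ×_Q G`) is surjective, then for
any two extensions `(X, i, j, m, n)` and `(X₁, i₁, j₁, m₁, n₁)` of Diagram 1 there is a group
isomorphism `φ : X → X₁` with `φ ∘ (i∘μ) = i₁∘μ`, `m₁ ∘ φ = m` and `n₁ ∘ φ = n`, i.e. `φ`
carries the extension `0 → P → X → Y → 0` to `0 → P → X₁ → Y → 0` over the identities of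
`P` and `Y`. -/
theorem pawar_uniqueness_of_alpha_surjective
    {P E H X X₁ : Type u} [AddCommGroup P] [AddCommGroup E] [AddCommGroup H]
    [AddCommGroup X] [AddCommGroup X₁]
    -- row 1 : 0 → P → E → R → 0
    (ν : P →+ E) (πE : E →+ R)
    (hν : Function.Injective ν) (hπE : Function.Surjective πE)
    (hrow1 : AddMonoidHom.ker πE = AddMonoidHom.range ν)
    -- row 2 : 0 → S → G → Q → 0
    (σ : S →+ G) (πG : G →+ Q)
    (hσ : Function.Injective σ) (hπG : Function.Surjective πG)
    (hrow2 : AddMonoidHom.ker πG = AddMonoidHom.range σ)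
    -- column 1 : 0 → P → H → S → 0
    (μ : P →+ H) (πH : H →+ S)
    (hμ : Function.Injective μ) (hπH : Function.Surjective πH)
    (hcol1 : AddMonoidHom.ker πH = AddMonoidHom.range μ)
    -- column 2 : 0 → R → F → Q → 0
    (ρ : R →+ F) (πF : F →+ Q)
    (hρ : Function.Injective ρ) (hπF : Function.Surjective πF)
    (hcol2 : AddMonoidHom.ker πF = AddMonoidHom.range ρ)
    -- the connecting homomorphism α is surjective
    (halpha : Function.Surjective
      (alphaMap (P := P) ρ σ πF πG hρ hσ hπF hπG hcol2 hrow2))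
    -- the extension (X, i, j, m, n) of Diagram 1
    (i : H →+ X) (j : E →+ X) (m : X →+ F) (n : X →+ G)
    (hi : Function.Injective i) (hm : Function.Surjective m)
    (hmidrow : AddMonoidHom.ker m = AddMonoidHom.range i)
    (hj : Function.Injective j) (hn : Function.Surjective n)
    (hmidcol : AddMonoidHom.ker n = AddMonoidHom.range j)
    (hsq1 : i.comp μ = j.comp ν)
    (hsq2 : m.comp j = ρ.comp πE)
    (hsq3 : n.comp i = σ.comp πH)
    (hsq4 : πF.comp m = πG.comp n)
    -- the extension (X₁, i₁, j₁, m₁, n₁) of Diagram 1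
    (i₁ : H →+ X₁) (j₁ : E →+ X₁) (m₁ : X₁ →+ F) (n₁ : X₁ →+ G)
    (hi₁ : Function.Injective i₁) (hm₁ : Function.Surjective m₁)
    (hmidrow₁ : AddMonoidHom.ker m₁ = AddMonoidHom.range i₁)
    (hj₁ : Function.Injective j₁) (hn₁ : Function.Surjective n₁)
    (hmidcol₁ : AddMonoidHom.ker n₁ = AddMonoidHom.range j₁)
    (hsq1₁ : i₁.comp μ = j₁.comp ν)
    (hsq2₁ : m₁.comp j₁ = ρ.comp πE)
    (hsq3₁ : n₁.comp i₁ = σ.comp πH)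
    (hsq4₁ : πF.comp m₁ = πG.comp n₁) :
    ∃ φ : X ≃+ X₁,
      (∀ p : P, φ (i (μ p)) = i₁ (μ p)) ∧
      (∀ x : X, m₁ (φ x) = m x) ∧
      (∀ x : X, n₁ (φ x) = n x) := by
  classical
  -- basic pointwise identities
  have hmi : ∀ h : H, m (i h) = 0 := fun h => by
    have hx : i h ∈ AddMonoidHom.ker m := by rw [hmidrow]; exact ⟨h, rfl⟩
    exact hx
  have hmi₁ : ∀ h : H, m₁ (i₁ h) = 0 := fun h => by
    have hx : i₁ h ∈ AddMonoidHom.ker m₁ := by rw [hmidrow₁]; exact ⟨h, rfl⟩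
    exact hx
  have hnj : ∀ e : E, n (j e) = 0 := fun e => by
    have hx : j e ∈ AddMonoidHom.ker n := by rw [hmidcol]; exact ⟨e, rfl⟩
    exact hx
  have hnj₁ : ∀ e : E, n₁ (j₁ e) = 0 := fun e => by
    have hx : j₁ e ∈ AddMonoidHom.ker n₁ := by rw [hmidcol₁]; exact ⟨e, rfl⟩
    exact hx
  have hπHμ : ∀ p : P, πH (μ p) = 0 := fun p => by
    have hx : μ p ∈ AddMonoidHom.ker πH := by rw [hcol1]; exact ⟨p, rfl⟩
    exact hx
  have hni : ∀ h : H, n (i h) = σ (πH h) := fun h => DFunLike.congr_fun hsq3 h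
  have hni₁ : ∀ h : H, n₁ (i₁ h) = σ (πH h) := fun h => DFunLike.congr_fun hsq3₁ h
  have hmj : ∀ e : E, m (j e) = ρ (πE e) := fun e => DFunLike.congr_fun hsq2 e
  have hmj₁ : ∀ e : E, m₁ (j₁ e) = ρ (πE e) := fun e => DFunLike.congr_fun hsq2₁ e
  have hjν : ∀ p : P, j (ν p) = i (μ p) := fun p => (DFunLike.congr_fun hsq1 p).symm
  have hjν₁ : ∀ p : P, j₁ (ν p) = i₁ (μ p) := fun p => (DFunLike.congr_fun hsq1₁ p).symm
  have hniμ : ∀ p : P, n (i (μ p)) = 0 := fun p => by rw [hni, hπHμ, map_zero]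
  have hniμ₁ : ∀ p : P, n₁ (i₁ (μ p)) = 0 := fun p => by rw [hni₁, hπHμ, map_zero]
  have hmiμ : ∀ p : P, m (i (μ p)) = 0 := fun p => hmi _
  have hmiμ₁ : ∀ p : P, m₁ (i₁ (μ p)) = 0 := fun p => hmi₁ _
  -- the maps to the pullback Y
  have hθmem : ∀ x : X, (m x, n x) ∈ pullbackSubgroup πF πG := fun x =>
    DFunLike.congr_fun hsq4 x
  have hθmem₁ : ∀ x : X₁, (m₁ x, n₁ x) ∈ pullbackSubgroup πF πG := fun x =>
    DFunLike.congr_fun hsq4₁ x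
  let θ : X →+ pullbackSubgroup πF πG := AddMonoidHom.codRestrict (m.prod n) _ hθmem
  let θ₁ : X₁ →+ pullbackSubgroup πF πG := AddMonoidHom.codRestrict (m₁.prod n₁) _ hθmem₁
  -- the subgroup D of X × X₁
  let DD : AddSubgroup (X × X₁) :=
    { carrier := {d | m d.1 = m₁ d.2 ∧ n d.1 = n₁ d.2}
      zero_mem' := by simp
      add_mem' := by
        rintro a b ⟨ha1, ha2⟩ ⟨hb1, hb2⟩
        constructor <;> simp only [Set.mem_setOf_eq, Prod.fst_add, Prod.snd_add, map_add]
        · rw [ha1, hb1]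
        · rw [ha2, hb2]
      neg_mem' := by
        rintro a ⟨ha1, ha2⟩
        constructor <;> simp only [Set.mem_setOf_eq, Prod.fst_neg, Prod.snd_neg, map_neg]
        · rw [ha1]
        · rw [ha2] }
  have memD : ∀ {d : X × X₁}, d ∈ DD → m d.1 = m₁ d.2 ∧ n d.1 = n₁ d.2 := fun h => h
  have memDI : ∀ {d : X × X₁}, m d.1 = m₁ d.2 → n d.1 = n₁ d.2 → d ∈ DD :=
    fun h1 h2 => ⟨h1, h2⟩
  -- the antidiagonal copy of P inside D
  let dPΔ : P →+ DD := AddMonoidHom.codRestrict ((i.comp μ).prod (i₁.comp μ)) _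
    (fun p => memDI (by show m (i (μ p)) = m₁ (i₁ (μ p)); rw [hmiμ, hmiμ₁])
      (by show n (i (μ p)) = n₁ (i₁ (μ p)); rw [hniμ, hniμ₁]))
  let Δr : AddSubgroup DD := AddMonoidHom.range dPΔ
  let W := DD ⧸ Δr
  let mkW : DD →+ W := QuotientAddGroup.mk' Δr
  -- the inclusion of P in W
  let dP0 : P →+ DD := AddMonoidHom.codRestrict ((i.comp μ).prod 0) _
    (fun p => memDI (by show m (i (μ p)) = m₁ 0; rw [hmiμ, map_zero])
      (by show n (i (μ p)) = n₁ 0; rw [hniμ, map_zero]))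
  let aW : P →+ W := mkW.comp dP0
  -- the projection of W onto Y
  let θD : DD →+ pullbackSubgroup πF πG :=
    θ.comp ((AddMonoidHom.fst X X₁).comp DD.subtype)
  have hθiμ : ∀ p : P, θ (i (μ p)) = 0 := by
    intro p
    apply Subtype.ext
    show (m (i (μ p)), n (i (μ p))) = ((0 : pullbackSubgroup πF πG) : F × G)
    rw [hmiμ, hniμ]
    rfl
  have hθDΔ : Δr ≤ AddMonoidHom.ker θD := by
    rintro d ⟨p, rfl⟩
    show θ (i (μ p)) = 0
    exact hθiμ p
  let gW : W →+ pullbackSubgroup πF πG := QuotientAddGroup.lift Δr θD hθDΔ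
  have hgWmk : ∀ d : DD, gW (mkW d) = θ ((d : X × X₁).1) := fun d => rfl
  have hzeroWP : ∀ p : P, gW (aW p) = 0 := fun p => hθiμ p
  let SW : ShortComplex AddCommGrpCat.{u} :=
    ShortComplex.mk (AddCommGrpCat.ofHom aW) (AddCommGrpCat.ofHom gW)
      (AddCommGrpCat.hom_ext (AddMonoidHom.ext fun p => hzeroWP p))
  have hSW : SW.ShortExact := by
    refine ShortComplex.ShortExact.mk' ?_ ?_ ?_
    · rw [ShortComplex.ab_exact_iff]
      intro w hw
      obtain ⟨d, rfl⟩ := QuotientAddGroup.mk'_surjective Δr w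
      have hw' : θ ((d : X × X₁).1) = 0 := hw
      have hw1 : m (d : X × X₁).1 = 0 := congrArg Prod.fst (congrArg Subtype.val hw')
      have hw2 : n (d : X × X₁).1 = 0 := congrArg Prod.snd (congrArg Subtype.val hw')
      obtain ⟨p, hp⟩ := pawar_aux_ker σ hσ μ πH hcol1 i m n hmidrow hsq3 _ hw1 hw2
      have hmemd := memD d.2
      have hd1 : m₁ (d : X × X₁).2 = 0 := by rw [← hmemd.1, hw1]
      have hd2 : n₁ (d : X × X₁).2 = 0 := by rw [← hmemd.2, hw2]
      obtain ⟨p', hp'⟩ := pawar_aux_ker σ hσ μ πH hcol1 i₁ m₁ n₁ hmidrow₁ hsq3₁ _ hd1 hd2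
      refine ⟨p - p', ?_⟩
      show mkW (dP0 (p - p')) = mkW d
      have hdecomp : d = dP0 (p - p') + dPΔ p' := by
        apply Subtype.ext
        apply Prod.ext
        · show (d : X × X₁).1 = i (μ (p - p')) + i (μ p')
          rw [← map_add, ← map_add, sub_add_cancel, hp]
        · show (d : X × X₁).2 = 0 + i₁ (μ p')
          rw [zero_add, hp']
      rw [hdecomp, map_add,
        show mkW (dPΔ p') = 0 from (QuotientAddGroup.eq_zero_iff _).mpr ⟨p', rfl⟩, add_zero]
    · rw [AddCommGrpCat.mono_iff_injective]
      intro p q hpq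
      have h1 : aW (p - q) = 0 := by
        rw [map_sub, show aW p = aW q from hpq, sub_self]
      have h2 : dP0 (p - q) ∈ Δr := (QuotientAddGroup.eq_zero_iff _).mp h1
      obtain ⟨r, hr⟩ := h2
      have hr' := congrArg Subtype.val hr
      have hr2 : i₁ (μ r) = 0 := congrArg Prod.snd hr'
      have hr0 : r = 0 := hμ (hi₁ (by rw [hr2, map_zero, map_zero]))
      have hr1 : i (μ r) = i (μ (p - q)) := congrArg Prod.fst hr'
      rw [hr0, map_zero, map_zero] at hr1
      have h4 : p - q = 0 := by
        apply hμ; apply hi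
        rw [← hr1, map_zero, map_zero]
      exact sub_eq_zero.mp h4
    · rw [AddCommGrpCat.epi_iff_surjective]
      have hgWsurj : Function.Surjective gW := by
        intro y
        obtain ⟨x, hx1, hx2⟩ :=
          pawar_aux_surj σ πG hrow2 πH hπH πF i m n hm hmidrow hsq3 hsq4 y
        obtain ⟨x₁, hx₁1, hx₁2⟩ :=
          pawar_aux_surj σ πG hrow2 πH hπH πF i₁ m₁ n₁ hm₁ hmidrow₁ hsq3₁ hsq4₁ y
        refine ⟨mkW ⟨(x, x₁), memDI (by rw [hx1, hx₁1]) (by rw [hx2, hx₁2])⟩, ?_⟩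
        show θ x = y
        apply Subtype.ext
        show (m x, n x) = (y : F × G)
        rw [hx1, hx2]
      exact fun y => hgWsurj y
  -- the canonical partial section of W over R ⊕ S
  let u0 : E × H →+ DD := AddMonoidHom.codRestrict
    ((j.comp (AddMonoidHom.fst E H) + i.comp (AddMonoidHom.snd E H)).prod
      (j₁.comp (AddMonoidHom.fst E H) + i₁.comp (AddMonoidHom.snd E H))) _
    (fun z => memDI
      (by
        show m (j z.1 + i z.2) = m₁ (j₁ z.1 + i₁ z.2)
        rw [map_add, map_add, hmi, hmi₁, hmj, hmj₁])
      (by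
        show n (j z.1 + i z.2) = n₁ (j₁ z.1 + i₁ z.2)
        rw [map_add, map_add, hnj, hnj₁, hni, hni₁]))
  let uW : E × H →+ W := mkW.comp u0
  let qEH : E × H →+ R × S := AddMonoidHom.prodMap πE πH
  have hqEH : Function.Surjective qEH := by
    rintro ⟨r, s⟩
    obtain ⟨e, he⟩ := hπE r
    obtain ⟨h, hh⟩ := hπH s
    exact ⟨(e, h), Prod.ext he hh⟩
  have hkerq : ∀ z : E × H, qEH z = 0 → uW z = 0 := by
    rintro ⟨e, h⟩ hz
    have hz1 : πE e = 0 := congrArg Prod.fst hz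
    have hz2 : πH h = 0 := congrArg Prod.snd hz
    have h1 : e ∈ AddMonoidHom.ker πE := hz1
    rw [hrow1] at h1
    obtain ⟨p, rfl⟩ := h1
    have h2 : h ∈ AddMonoidHom.ker πH := hz2
    rw [hcol1] at h2
    obtain ⟨p', rfl⟩ := h2
    have hu : u0 (ν p, μ p') = dPΔ (p + p') := by
      apply Subtype.ext
      apply Prod.ext
      · show j (ν p) + i (μ p') = i (μ (p + p'))
        rw [hjν, ← map_add, ← map_add]
      · show j₁ (ν p) + i₁ (μ p') = i₁ (μ (p + p'))
        rw [hjν₁, ← map_add, ← map_add]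
    show mkW (u0 (ν p, μ p')) = 0
    rw [hu]
    exact (QuotientAddGroup.eq_zero_iff _).mpr ⟨p + p', rfl⟩
  let tfun : R × S → W := fun rs => uW (Function.surjInv hqEH rs)
  have htadd : ∀ a b : R × S, tfun (a + b) = tfun a + tfun b := by
    intro a b
    have h1 : qEH (Function.surjInv hqEH (a + b) - Function.surjInv hqEH a -
        Function.surjInv hqEH b) = 0 := by
      rw [map_sub, map_sub, Function.surjInv_eq hqEH, Function.surjInv_eq hqEH,
        Function.surjInv_eq hqEH]
      abel
    have h2 := hkerq _ h1
    rw [map_sub, map_sub, sub_sub, sub_eq_zero] at h2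
    show uW (Function.surjInv hqEH (a + b)) = uW (Function.surjInv hqEH a) +
      uW (Function.surjInv hqEH b)
    rw [h2]
  let tRS : R × S →+ W := AddMonoidHom.mk' tfun htadd
  have htRS : ∀ rs : R × S, gW (tRS rs) = iotaRS ρ σ πF πG hcol2 hrow2 rs := by
    intro rs
    have hq := Function.surjInv_eq hqEH rs
    set z := Function.surjInv hqEH rs with hz
    show θ ((u0 z : X × X₁).1) = iotaRS ρ σ πF πG hcol2 hrow2 rs
    apply Subtype.ext
    show (m (j z.1 + i z.2), n (j z.1 + i z.2)) = (ρ rs.1, σ rs.2)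
    have h1 : m (j z.1 + i z.2) = ρ (πE z.1) := by rw [map_add, hmi, add_zero, hmj]
    have h2 : n (j z.1 + i z.2) = σ (πH z.2) := by rw [map_add, hnj, zero_add, hni]
    rw [h1, h2, show πE z.1 = rs.1 from congrArg Prod.fst hq,
      show πH z.2 = rs.2 from congrArg Prod.snd hq]
  -- the Ext-theoretic argument: the class of 0 → P → W → Y → 0 vanishes
  have hSpb := pullbackShortComplex_shortExact ρ σ πF πG hρ hσ hπF hπG hcol2 hrow2
  have hcomm : AddCommGrpCat.ofHom tRS ≫ SW.g = (pullbackShortComplex ρ σ πF πG hcol2 hrow2).f := by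
    exact AddCommGrpCat.hom_ext (AddMonoidHom.ext fun rs => htRS rs)
  have claim1 : (Abelian.Ext.mk₀ (pullbackShortComplex ρ σ πF πG hcol2 hrow2).f).comp
      hSW.extClass (zero_add 1) = 0 := by
    have key := Abelian.Ext.mk₀_comp_mk₀_assoc (AddCommGrpCat.ofHom tRS) SW.g hSW.extClass
    rw [hSW.comp_extClass, Abelian.Ext.comp_zero] at key
    exact (congrArg (fun f => (Abelian.Ext.mk₀ f).comp hSW.extClass (zero_add 1)) hcomm).symm.trans key.symm
  obtain ⟨x₁cl, hx₁cl⟩ := Abelian.Ext.contravariant_sequence_exact₂ hSpb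
    (AddCommGrpCat.of P) hSW.extClass claim1
  obtain ⟨lam, hlam⟩ := halpha x₁cl
  have hW0 : hSW.extClass = 0 := by
    rw [← hx₁cl, ← hlam]
    unfold alphaMap
    exact hSpb.comp_extClass_assoc _ _
  obtain ⟨sec, hsec0⟩ := splitting_of_extClass_eq_zero' hSW hW0
  let sh : (pullbackSubgroup πF πG : AddSubgroup (F × G)) →+ W := sec.hom
  have hsec : ∀ y : pullbackSubgroup πF πG, gW (sh y) = y := by
    intro y
    have h1 : (sec ≫ SW.g) y = (𝟙 SW.X₃) y := by rw [hsec0]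
    exact h1
  -- construction of φ
  have exu : ∀ x : X, ∃ x₁ : X₁, ∃ hd : ((x, x₁) ∈ DD), mkW ⟨(x, x₁), hd⟩ = sh (θ x) := by
    intro x
    obtain ⟨d, hd⟩ := QuotientAddGroup.mk'_surjective Δr (sh (θ x))
    have hd' : mkW d = sh (θ x) := hd
    have h1 : θ ((d : X × X₁).1) = θ x := by
      rw [← hgWmk d, hd', hsec]
    have h1v := congrArg Subtype.val h1
    have h1m : m (d : X × X₁).1 = m x := congrArg Prod.fst h1v
    have h1n : n (d : X × X₁).1 = n x := congrArg Prod.snd h1v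
    obtain ⟨p, hp⟩ := pawar_aux_ker σ hσ μ πH hcol1 i m n hmidrow hsq3
      ((d : X × X₁).1 - x) (by rw [map_sub, h1m, sub_self]) (by rw [map_sub, h1n, sub_self])
    have hmemd := memD d.2
    have hmem : (x, (d : X × X₁).2 - i₁ (μ p)) ∈ DD := memDI
      (by show m x = m₁ _; rw [map_sub, hmiμ₁, sub_zero, ← hmemd.1, h1m])
      (by show n x = n₁ _; rw [map_sub, hniμ₁, sub_zero, ← hmemd.2, h1n])
    refine ⟨(d : X × X₁).2 - i₁ (μ p), hmem, ?_⟩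
    have helem : (⟨(x, (d : X × X₁).2 - i₁ (μ p)), hmem⟩ : DD) = d - dPΔ p := by
      apply Subtype.ext
      apply Prod.ext
      · show x = (d : X × X₁).1 - i (μ p)
        rw [hp]
        abel
      · rfl
    rw [helem, map_sub, hd',
      show mkW (dPΔ p) = 0 from (QuotientAddGroup.eq_zero_iff _).mpr ⟨p, rfl⟩, sub_zero]
  have mk_inj : ∀ (x : X) (y₁ y₁' : X₁) (h1 : (x, y₁) ∈ DD) (h2 : (x, y₁') ∈ DD),
      mkW ⟨(x, y₁), h1⟩ = mkW ⟨(x, y₁'), h2⟩ → y₁ = y₁' := by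
    intro x y₁ y₁' h1 h2 heq
    have h3 : mkW (⟨(x, y₁'), h2⟩ - ⟨(x, y₁), h1⟩) = 0 := by
      rw [map_sub, heq, sub_self]
    obtain ⟨q, hq⟩ := (QuotientAddGroup.eq_zero_iff _).mp h3
    have hqv := congrArg Subtype.val hq
    have hq1 : i (μ q) = x - x := congrArg Prod.fst hqv
    have hq0 : q = 0 := by
      apply hμ; apply hi
      rw [hq1, sub_self, map_zero, map_zero]
    have hq2 : i₁ (μ q) = y₁' - y₁ := congrArg Prod.snd hqv
    rw [hq0, map_zero, map_zero] at hq2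
    exact (sub_eq_zero.mp hq2.symm).symm
  let φ0 : X → X₁ := fun x => (exu x).choose
  have hspec : ∀ x : X, ∃ hd : ((x, φ0 x) ∈ DD), mkW ⟨(x, φ0 x), hd⟩ = sh (θ x) :=
    fun x => (exu x).choose_spec
  have huniq : ∀ (x : X) (y₁ : X₁),
      (∃ hd : ((x, y₁) ∈ DD), mkW ⟨(x, y₁), hd⟩ = sh (θ x)) → y₁ = φ0 x := by
    rintro x y₁ ⟨hd1, he1⟩
    obtain ⟨hd2, he2⟩ := hspec x
    exact mk_inj x y₁ (φ0 x) hd1 hd2 (he1.trans he2.symm)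
  have hmφ : ∀ x : X, m₁ (φ0 x) = m x := by
    intro x
    obtain ⟨hd, -⟩ := hspec x
    exact (memD hd).1.symm
  have hnφ : ∀ x : X, n₁ (φ0 x) = n x := by
    intro x
    obtain ⟨hd, -⟩ := hspec x
    exact (memD hd).2.symm
  have hadd : ∀ x y : X, φ0 (x + y) = φ0 x + φ0 y := by
    intro x y
    obtain ⟨hdx, hex⟩ := hspec x
    obtain ⟨hdy, hey⟩ := hspec y
    have hmem : (x + y, φ0 x + φ0 y) ∈ DD := memDI
      (by show m (x + y) = m₁ _; rw [map_add, map_add, hmφ, hmφ])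
      (by show n (x + y) = n₁ _; rw [map_add, map_add, hnφ, hnφ])
    symm
    apply huniq
    refine ⟨hmem, ?_⟩
    have helem : (⟨(x + y, φ0 x + φ0 y), hmem⟩ : DD) = ⟨(x, φ0 x), hdx⟩ + ⟨(y, φ0 y), hdy⟩ :=
      rfl
    rw [helem, map_add, hex, hey, ← map_add, ← map_add]
  have hφiμ : ∀ p : P, φ0 (i (μ p)) = i₁ (μ p) := by
    intro p
    symm
    apply huniq
    have hmem : (i (μ p), i₁ (μ p)) ∈ DD := memDI
      (by show m _ = m₁ _; rw [hmiμ, hmiμ₁]) (by show n _ = n₁ _; rw [hniμ, hniμ₁])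
    refine ⟨hmem, ?_⟩
    rw [hθiμ p, map_zero]
    exact (QuotientAddGroup.eq_zero_iff _).mpr ⟨p, rfl⟩
  have hinj : ∀ x : X, φ0 x = 0 → x = 0 := by
    intro x hx
    have h1 : m x = 0 := by rw [← hmφ x, hx, map_zero]
    have h2 : n x = 0 := by rw [← hnφ x, hx, map_zero]
    obtain ⟨p, hp⟩ := pawar_aux_ker σ hσ μ πH hcol1 i m n hmidrow hsq3 x h1 h2
    have h3 : i₁ (μ p) = 0 := by rw [← hφiμ p, hp, hx]
    have h4 : p = 0 := by
      apply hμ; apply hi₁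
      rw [h3, map_zero, map_zero]
    rw [← hp, h4, map_zero, map_zero]
  have hsurj : ∀ x₁ : X₁, ∃ x : X, φ0 x = x₁ := by
    intro x₁
    obtain ⟨d, hd⟩ := QuotientAddGroup.mk'_surjective Δr (sh (θ₁ x₁))
    have hd' : mkW d = sh (θ₁ x₁) := hd
    have h1 : θ ((d : X × X₁).1) = θ₁ x₁ := by
      rw [← hgWmk d, hd', hsec]
    have h1v := congrArg Subtype.val h1
    have h1m : m (d : X × X₁).1 = m₁ x₁ := congrArg Prod.fst h1v
    have h1n : n (d : X × X₁).1 = n₁ x₁ := congrArg Prod.snd h1v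
    have hmemd := memD d.2
    obtain ⟨p, hp⟩ := pawar_aux_ker σ hσ μ πH hcol1 i₁ m₁ n₁ hmidrow₁ hsq3₁
      ((d : X × X₁).2 - x₁) (by rw [map_sub, ← hmemd.1, h1m, sub_self])
      (by rw [map_sub, ← hmemd.2, h1n, sub_self])
    refine ⟨(d : X × X₁).1 - i (μ p), ?_⟩
    symm
    apply huniq
    have hmem : ((d : X × X₁).1 - i (μ p), x₁) ∈ DD := memDI
      (by show m _ = m₁ x₁; rw [map_sub, hmiμ, sub_zero, h1m])
      (by show n _ = n₁ x₁; rw [map_sub, hniμ, sub_zero, h1n])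
    refine ⟨hmem, ?_⟩
    have hθx : θ ((d : X × X₁).1 - i (μ p)) = θ₁ x₁ := by
      apply Subtype.ext
      show (m _, n _) = ((θ₁ x₁ : F × G))
      show (m _, n _) = (m₁ x₁, n₁ x₁)
      rw [map_sub, map_sub, hmiμ, hniμ, sub_zero, sub_zero, h1m, h1n]
    rw [hθx]
    have helem : (⟨((d : X × X₁).1 - i (μ p), x₁), hmem⟩ : DD) = d - dPΔ p := by
      apply Subtype.ext
      apply Prod.ext
      · rfl
      · show x₁ = (d : X × X₁).2 - i₁ (μ p)
        rw [hp]
        abel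
    rw [helem, map_sub, hd',
      show mkW (dPΔ p) = 0 from (QuotientAddGroup.eq_zero_iff _).mpr ⟨p, rfl⟩, sub_zero]
  let φh : X →+ X₁ := AddMonoidHom.mk' φ0 hadd
  have hbij : Function.Bijective φh :=
    ⟨(injective_iff_map_eq_zero φh).mpr hinj, hsurj⟩
  exact ⟨AddEquiv.ofBijective φh hbij, fun p => hφiμ p, fun x => hmφ x, fun x => hnφ x⟩
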